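/- Let k > 0, c ∈ (-k, 0), and suppose x := -c/k ∈ (0,1) satisfies x·log((1+x)/(1-x)) - log(1-x²) ≥ π/(2k). Then 11x⁴ - (18 + 3π/k)x² + 3π/k ≤ 0, and consequently c² ≥ (1/22)·(18k² + 3πk - √((18k² + 3πk)² - 132πk³)). -/

import Mathlib

open Real Set

noncomputable def gAux : ℝ → ℝ := fun x =>
  (18*x^2 - 11*x^4)/(6*(1-x^2)) + (1-x)*Real.log (1+x) + (1+x)*Real.log (1-x)

noncomputable def gAux1 : ℝ → ℝ := fun x =>
  x*(18-22*x^2+11*x^4)/(3*(1-x^2)^2) - 4*x/(1-x^2) - Real.log (1+x) + Real.log (1-x)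

lemma hasDerivAt_gAux {x : ℝ} (h0 : -1 < x) (h1 : x < 1) :
    HasDerivAt gAux (gAux1 x) x := by
  have h1x : (0:ℝ) < 1 + x := by linarith
  have h2x : (0:ℝ) < 1 - x := by linarith
  have h12 : (1:ℝ) - x^2 ≠ 0 := by nlinarith
  have hden : 6*(1-x^2) ≠ 0 := by nlinarith
  have hq : HasDerivAt (fun y:ℝ => 6*(1-y^2)) (6*(0 - 2*x^(2-1))) x :=
    ((hasDerivAt_const x (1:ℝ)).sub (hasDerivAt_pow 2 x)).const_mul 6
  have hp : HasDerivAt (fun y:ℝ => 18*y^2 - 11*y^4) (18*(2*x^(2-1)) - 11*(4*x^(4-1))) x :=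
    ((hasDerivAt_pow 2 x).const_mul 18).sub ((hasDerivAt_pow 4 x).const_mul 11)
  have hA := hp.div hq hden
  have hlin1 : HasDerivAt (fun y:ℝ => 1 + y) 1 x := by
    simpa using (hasDerivAt_id x).const_add (1:ℝ)
  have hlin2 : HasDerivAt (fun y:ℝ => 1 - y) (0-1) x :=
    (hasDerivAt_const x (1:ℝ)).sub (hasDerivAt_id x)
  have hlog1 : HasDerivAt (fun y:ℝ => Real.log (1+y)) (1/(1+x)) x := hlin1.log h1x.ne'
  have hlog2 : HasDerivAt (fun y:ℝ => Real.log (1-y)) ((0-1)/(1-x)) x := hlin2.log h2x.ne'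
  have hB := hlin2.mul hlog1
  have hC := hlin1.mul hlog2
  have hsum := (hA.add hB).add hC
  refine hsum.congr_deriv ?_
  unfold gAux1
  field_simp
  ring

lemma hasDerivAt_gAux1 {x : ℝ} (h0 : -1 < x) (h1 : x < 1) :
    HasDerivAt gAux1 (x^4*(39-11*x^2)/(3*(1-x^2)^3)) x := by
  have h1x : (0:ℝ) < 1 + x := by linarith
  have h2x : (0:ℝ) < 1 - x := by linarith
  have h12 : (1:ℝ) - x^2 ≠ 0 := by nlinarith
  have hden1 : 3*(1-x^2)^2 ≠ 0 := by positivity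
  have hden2 : (1:ℝ)-x^2 ≠ 0 := h12
  have hq1 : HasDerivAt (fun y:ℝ => 3*(1-y^2)^2)
      (3*(2*(1-x^2)^(2-1)*(0 - 2*x^(2-1)))) x := by
    exact (((hasDerivAt_const x (1:ℝ)).sub (hasDerivAt_pow 2 x)).pow 2).const_mul 3
  have hp1 : HasDerivAt (fun y:ℝ => y*(18-22*y^2+11*y^4))
      (1*(18-22*x^2+11*x^4) + x*((0 - 22*(2*x^(2-1))) + 11*(4*x^(4-1)))) x := by
    exact (hasDerivAt_id x).mul
      (((hasDerivAt_const x (18:ℝ)).sub ((hasDerivAt_pow 2 x).const_mul 22)).add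
        ((hasDerivAt_pow 4 x).const_mul 11))
  have hA := hp1.div hq1 hden1
  have hq2 : HasDerivAt (fun y:ℝ => 1-y^2) (0 - 2*x^(2-1)) x :=
    (hasDerivAt_const x (1:ℝ)).sub (hasDerivAt_pow 2 x)
  have hB := ((hasDerivAt_id x).const_mul (4:ℝ)).div hq2 hden2
  have hlin1 : HasDerivAt (fun y:ℝ => 1 + y) 1 x := by
    simpa using (hasDerivAt_id x).const_add (1:ℝ)
  have hlin2 : HasDerivAt (fun y:ℝ => 1 - y) (0-1) x :=
    (hasDerivAt_const x (1:ℝ)).sub (hasDerivAt_id x)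
  have hlog1 : HasDerivAt (fun y:ℝ => Real.log (1+y)) (1/(1+x)) x := hlin1.log h1x.ne'
  have hlog2 : HasDerivAt (fun y:ℝ => Real.log (1-y)) ((0-1)/(1-x)) x := hlin2.log h2x.ne'
  have hsum := ((hA.sub hB).sub hlog1).add hlog2
  refine hsum.congr_deriv ?_
  field_simp
  simp only [id_eq]
  ring

lemma gAux_nonneg {x : ℝ} (hx0 : 0 ≤ x) (hx1 : x < 1) : 0 ≤ gAux x := by
  -- gAux1 is monotone on Ico 0 1 and gAux1 0 = 0, so gAux1 ≥ 0 there;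
  -- hence gAux is monotone on Ico 0 1 and gAux 0 = 0.
  have hconv : Convex ℝ (Ico (0:ℝ) 1) := convex_Ico 0 1
  have hint : interior (Ico (0:ℝ) 1) = Ioo 0 1 := interior_Ico
  have hc1 : ContinuousOn gAux1 (Ico 0 1) := by
    intro y hy
    exact (hasDerivAt_gAux1 (by linarith [hy.1]) hy.2).continuousAt.continuousWithinAt
  have hm1 : MonotoneOn gAux1 (Ico 0 1) := by
    apply monotoneOn_of_deriv_nonneg hconv hc1
    · intro y hy
      rw [hint] at hy
      exact (hasDerivAt_gAux1 (by linarith [hy.1]) hy.2).differentiableAt.differentiableWithinAt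
    · intro y hy
      rw [hint] at hy
      rw [(hasDerivAt_gAux1 (by linarith [hy.1]) hy.2).deriv]
      have : (0:ℝ) < 1 - y^2 := by nlinarith [hy.1, hy.2]
      have h39 : (0:ℝ) < 39 - 11*y^2 := by nlinarith [hy.2]
      positivity
  have hg1_0 : gAux1 0 = 0 := by simp [gAux1]
  have hg1_nonneg : ∀ y ∈ Ico (0:ℝ) 1, 0 ≤ gAux1 y := by
    intro y hy
    have := hm1 (show (0:ℝ) ∈ Ico (0:ℝ) 1 by constructor <;> norm_num) hy hy.1
    rwa [hg1_0] at this
  have hc : ContinuousOn gAux (Ico 0 1) := by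
    intro y hy
    exact (hasDerivAt_gAux (by linarith [hy.1]) hy.2).continuousAt.continuousWithinAt
  have hm : MonotoneOn gAux (Ico 0 1) := by
    apply monotoneOn_of_deriv_nonneg hconv hc
    · intro y hy
      rw [hint] at hy
      exact (hasDerivAt_gAux (by linarith [hy.1]) hy.2).differentiableAt.differentiableWithinAt
    · intro y hy
      rw [hint] at hy
      rw [(hasDerivAt_gAux (by linarith [hy.1]) hy.2).deriv]
      exact hg1_nonneg y ⟨le_of_lt hy.1, hy.2⟩
  have hg0 : gAux 0 = 0 := by simp [gAux]
  have := hm (show (0:ℝ) ∈ Ico (0:ℝ) 1 by constructor <;> norm_num) ⟨hx0, hx1⟩ hx0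
  rwa [hg0] at this

lemma key_ineq {x : ℝ} (hx0 : 0 < x) (hx1 : x < 1) :
    x * Real.log ((1 + x) / (1 - x)) - Real.log (1 - x ^ 2) ≤
      (18*x^2 - 11*x^4)/(6*(1-x^2)) := by
  have h1x : (0:ℝ) < 1 + x := by linarith
  have h2x : (0:ℝ) < 1 - x := by linarith
  have hlq : Real.log ((1+x)/(1-x)) = Real.log (1+x) - Real.log (1-x) :=
    Real.log_div h1x.ne' h2x.ne'
  have hfac : (1:ℝ) - x^2 = (1+x)*(1-x) := by ring
  have hlm : Real.log (1 - x^2) = Real.log (1+x) + Real.log (1-x) := by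
    rw [hfac, Real.log_mul h1x.ne' h2x.ne']
  have hg := gAux_nonneg hx0.le hx1
  unfold gAux at hg
  rw [hlq, hlm]
  nlinarith [hg]

/-- Let k > 0, c ∈ (-k, 0), and suppose x := -c/k ∈ (0,1) satisfies
x·log((1+x)/(1-x)) - log(1-x²) ≥ π/(2k). Then 11x⁴ - (18 + 3π/k)x² + 3π/k ≤ 0,
and consequently c² ≥ (1/22)·(18k² + 3πk - √((18k² + 3πk)² - 132πk³)). -/
theorem stmt_6 (k c : ℝ) (hk : 0 < k) (hc₁ : -k < c) (hc₂ : c < 0)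
    (x : ℝ) (hx : x = -c / k)
    (h : x * Real.log ((1 + x) / (1 - x)) - Real.log (1 - x ^ 2) ≥ π / (2 * k)) :
    11 * x ^ 4 - (18 + 3 * π / k) * x ^ 2 + 3 * π / k ≤ 0 ∧
    c ^ 2 ≥ (1 / 22) * (18 * k ^ 2 + 3 * π * k
      - Real.sqrt ((18 * k ^ 2 + 3 * π * k) ^ 2 - 132 * π * k ^ 3)) := by
  have hx0 : 0 < x := by rw [hx]; exact div_pos (by linarith) hk
  have hx1 : x < 1 := by
    rw [hx, div_lt_one hk]; linarith
  have h12 : (0:ℝ) < 1 - x^2 := by nlinarith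
  have hchain : π / (2*k) ≤ (18*x^2 - 11*x^4)/(6*(1-x^2)) :=
    le_trans h (key_ineq hx0 hx1)
  rw [div_le_div_iff₀ (by positivity) (by positivity)] at hchain
  -- hchain : π * (6*(1-x^2)) ≤ (18x²-11x⁴)*(2k)
  have claim1k : 11*k*x^4 - (18*k + 3*π)*x^2 + 3*π ≤ 0 := by nlinarith
  have claim1 : 11 * x ^ 4 - (18 + 3 * π / k) * x ^ 2 + 3 * π / k ≤ 0 := by
    rw [show 11 * x ^ 4 - (18 + 3 * π / k) * x ^ 2 + 3 * π / k
        = (11*k*x^4 - (18*k + 3*π)*x^2 + 3*π)/k by field_simp]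
    exact div_nonpos_of_nonpos_of_nonneg claim1k hk.le
  refine ⟨claim1, ?_⟩
  have hc : c = -(k*x) := by
    rw [hx]; field_simp
  have hc2 : c^2 = k^2 * x^2 := by rw [hc]; ring
  have hc4 : c^4 = k^4 * x^4 := by rw [hc]; ring
  set B := 18*k^2 + 3*π*k with hB
  have hquad : 11*c^4 - B*c^2 + 3*π*k^3 ≤ 0 := by
    rw [hc2, hc4, hB]
    have h3 : (0:ℝ) < k^3 := by positivity
    nlinarith [mul_nonpos_of_nonpos_of_nonneg claim1k h3.le]
  have hsq : (B - 22*c^2)^2 ≤ B^2 - 132*π*k^3 := by nlinarith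
  have hsqrt : B - 22*c^2 ≤ Real.sqrt (B^2 - 132*π*k^3) := by
    calc B - 22*c^2 ≤ |B - 22*c^2| := le_abs_self _
    _ = Real.sqrt ((B - 22*c^2)^2) := (Real.sqrt_sq_eq_abs _).symm
    _ ≤ Real.sqrt (B^2 - 132*π*k^3) := Real.sqrt_le_sqrt hsq
  rw [ge_iff_le, hB] at *
  linarith
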